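/- arXiv:1704.03637 — 2 statements merged into one kernel-verified Lean document; each statement's English description precedes it below -/
import Mathlib

section
/- Suppose m = p^i·q^j where p < q are primes, i is a positive integer, and j ≥ 2. Then property P₂ fails for m: there exists a squarefree reducible polynomial f ∈ 𝔽₂[X] of degree m with o(f) = m. -/
open Polynomial

namespace Stmt16Aux

open scoped Classical

lemma pow_pow_of_pow_eq {K : Type*} [Monoid K] {x : K} {c : ℕ} (h : x ^ c = x) :
    ∀ k, x ^ c ^ k = x
  | 0 => pow_one x
  | k+1 => by rw [pow_succ, pow_mul, pow_pow_of_pow_eq h k, h]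

lemma pow_of_dvd {K : Type*} [Monoid K] {x : K} {d n : ℕ} (hdn : d ∣ n)
    (h : x ^ 2 ^ d = x) : x ^ 2 ^ n = x := by
  obtain ⟨k, rfl⟩ := hdn
  rw [pow_mul, pow_pow_of_pow_eq h k]

noncomputable local instance instFinK (m : ℕ) : Fintype (GaloisField 2 m) := Fintype.ofFinite _

variable {m : ℕ}

lemma card_adjoin' (x : GaloisField 2 m)
    [Fintype (IntermediateField.adjoin (ZMod 2) ({x} : Set (GaloisField 2 m)))] :
    Fintype.card (IntermediateField.adjoin (ZMod 2) ({x} : Set (GaloisField 2 m)))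
      = 2 ^ (minpoly (ZMod 2) x).natDegree := by
  have hint : IsIntegral (ZMod 2) x := IsIntegral.of_finite _ x
  rw [Module.card_eq_pow_finrank (K := ZMod 2), IntermediateField.adjoin.finrank hint, ZMod.card]

lemma pow_deg (x : GaloisField 2 m) :
    x ^ 2 ^ (minpoly (ZMod 2) x).natDegree = x := by
  haveI : Fintype (IntermediateField.adjoin (ZMod 2) ({x} : Set (GaloisField 2 m))) :=
    Fintype.ofFinite _
  have hxL : x ∈ IntermediateField.adjoin (ZMod 2) ({x} : Set (GaloisField 2 m)) :=
    IntermediateField.subset_adjoin _ _ rfl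
  have key := FiniteField.pow_card
    (⟨x, hxL⟩ : IntermediateField.adjoin (ZMod 2) ({x} : Set (GaloisField 2 m)))
  rw [card_adjoin' x] at key
  have := congrArg (Subtype.val) key
  simpa using this

lemma card_fixed_le (m r : ℕ) (hr : 0 < r) :
    (Finset.univ.filter fun x : GaloisField 2 m => x ^ 2 ^ r = x).card ≤ 2 ^ r := by
  have hne : (X ^ 2 ^ r - X : (GaloisField 2 m)[X]) ≠ 0 :=
    FiniteField.X_pow_card_sub_X_ne_zero _ (Nat.one_lt_two_pow_iff.mpr (by omega))
  have hsub : (Finset.univ.filter fun x : GaloisField 2 m => x ^ 2 ^ r = x)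
      ⊆ (X ^ 2 ^ r - X : (GaloisField 2 m)[X]).roots.toFinset := by
    intro x hx
    rw [Finset.mem_filter] at hx
    rw [Multiset.mem_toFinset, mem_roots hne]
    simp only [IsRoot.def, eval_sub, eval_pow, eval_X, sub_eq_zero]
    exact hx.2
  calc _ ≤ (X ^ 2 ^ r - X : (GaloisField 2 m)[X]).roots.toFinset.card :=
        Finset.card_le_card hsub
    _ ≤ Multiset.card (X ^ 2 ^ r - X : (GaloisField 2 m)[X]).roots :=
        Multiset.toFinset_card_le _
    _ ≤ (X ^ 2 ^ r - X : (GaloisField 2 m)[X]).natDegree := card_roots' _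
    _ = 2 ^ r := FiniteField.X_pow_card_sub_X_natDegree_eq _
        (Nat.one_lt_two_pow_iff.mpr (by omega))

lemma deg_dvd (x : GaloisField 2 m) {n : ℕ} (h : x ^ 2 ^ n = x) :
    (minpoly (ZMod 2) x).natDegree ∣ n := by
  set d := (minpoly (ZMod 2) x).natDegree with hd
  have hint : IsIntegral (ZMod 2) x := IsIntegral.of_finite _ x
  have hd0 : 0 < d := minpoly.natDegree_pos hint
  have hxd : x ^ 2 ^ d = x := pow_deg x
  have hmod : x ^ 2 ^ (n % d) = x := by
    have h1 : x ^ 2 ^ (d * (n / d)) = x := pow_of_dvd (Dvd.intro _ rfl) hxd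
    calc x ^ 2 ^ (n % d) = (x ^ 2 ^ (d * (n / d))) ^ 2 ^ (n % d) := by rw [h1]
      _ = x ^ 2 ^ (d * (n / d) + n % d) := by rw [← pow_mul, ← pow_add]
      _ = x ^ 2 ^ n := by rw [Nat.div_add_mod]
      _ = x := h
  rcases Nat.eq_zero_or_pos (n % d) with hz | hpos
  · exact Nat.dvd_of_mod_eq_zero hz
  · exfalso
    set r := n % d with hrdef
    have hrd : r < d := Nat.mod_lt _ hd0
    let T : Subalgebra (ZMod 2) (GaloisField 2 m) :=
      { carrier := {y | y ^ 2 ^ r = y}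
        mul_mem' := by
          intro a b ha hb
          simp only [Set.mem_setOf_eq] at *
          rw [mul_pow, ha, hb]
        add_mem' := by
          intro a b ha hb
          simp only [Set.mem_setOf_eq] at *
          rw [add_pow_char_pow (p := 2), ha, hb]
        one_mem' := by simp
        zero_mem' := by
          simp only [Set.mem_setOf_eq]
          exact zero_pow (by positivity)
        algebraMap_mem' := by
          intro z
          simp only [Set.mem_setOf_eq, ← map_pow]
          congr 1
          have h2 : z ^ (2:ℕ) = z := by revert z; decide
          exact pow_pow_of_pow_eq h2 r }
    have hadj : Algebra.adjoin (ZMod 2) ({x} : Set (GaloisField 2 m)) ≤ T :=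
      Algebra.adjoin_le_iff.mpr (by simpa [T] using hmod)
    haveI : Fintype (IntermediateField.adjoin (ZMod 2) ({x} : Set (GaloisField 2 m))) :=
      Fintype.ofFinite _
    have hsubal := IntermediateField.adjoin_simple_toSubalgebra_of_isAlgebraic hint.isAlgebraic
    have hsub : ∀ y : IntermediateField.adjoin (ZMod 2) ({x} : Set (GaloisField 2 m)),
        (y : GaloisField 2 m) ^ 2 ^ r = (y : GaloisField 2 m) := by
      intro y
      have hy : (y : GaloisField 2 m) ∈ Algebra.adjoin (ZMod 2) ({x} : Set (GaloisField 2 m)) := by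
        rw [← hsubal]
        exact (IntermediateField.mem_toSubalgebra _ _).mpr y.2
      exact hadj hy
    set Fr := Finset.univ.filter (fun y : GaloisField 2 m => y ^ 2 ^ r = y) with hFr
    have hmap : ∀ y : IntermediateField.adjoin (ZMod 2) ({x} : Set (GaloisField 2 m)),
        (y : GaloisField 2 m) ∈ Fr := by
      intro y
      rw [hFr, Finset.mem_filter]
      exact ⟨Finset.mem_univ _, hsub y⟩
    have hcardle : Fintype.card (IntermediateField.adjoin (ZMod 2) ({x} : Set (GaloisField 2 m)))
        ≤ Fr.card := by
      have hinj : Function.Injective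
          (fun y : IntermediateField.adjoin (ZMod 2) ({x} : Set (GaloisField 2 m)) =>
            (⟨(y : GaloisField 2 m), hmap y⟩ : {z // z ∈ Fr})) := by
        intro a b hab
        exact Subtype.ext (Subtype.mk_eq_mk.mp hab)
      have := Fintype.card_le_of_injective _ hinj
      simpa [Fintype.card_coe] using this
    rw [card_adjoin' x, ← hd] at hcardle
    have h2 := card_fixed_le m r hpos
    have h3 : (2:ℕ) ^ r < 2 ^ d := Nat.pow_lt_pow_right one_lt_two hrd
    exact lt_irrefl _ (lt_of_le_of_lt hcardle (lt_of_le_of_lt h2 h3))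

lemma minpoly_dvd_iff (x : GaloisField 2 m) (n : ℕ) :
    minpoly (ZMod 2) x ∣ (X ^ 2 ^ n - X : (ZMod 2)[X]) ↔ x ^ 2 ^ n = x := by
  constructor
  · rintro ⟨t, ht⟩
    have := congrArg (aeval x) ht
    rw [map_mul, minpoly.aeval, zero_mul, map_sub, aeval_X_pow, aeval_X, sub_eq_zero] at this
    exact this
  · intro h
    exact minpoly.dvd _ _ (by rw [map_sub, aeval_X_pow, aeval_X, sub_eq_zero]; exact h)

lemma minpoly_dvd_iff' (x : GaloisField 2 m) (n : ℕ) :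
    minpoly (ZMod 2) x ∣ (X ^ 2 ^ n - X : (ZMod 2)[X])
      ↔ (minpoly (ZMod 2) x).natDegree ∣ n := by
  rw [minpoly_dvd_iff]
  exact ⟨deg_dvd x, fun h => pow_of_dvd h (pow_deg x)⟩


lemma S_dvd_S {R : Type*} [CommRing R] {d n : ℕ} (h : d ∣ n) :
    (X ^ 2 ^ d - X : R[X]) ∣ X ^ 2 ^ n - X := by
  have h1 : (2:ℕ) ^ d - 1 ∣ 2 ^ n - 1 := by
    obtain ⟨k, rfl⟩ := h
    simpa [pow_mul] using Nat.sub_dvd_pow_sub_pow (2 ^ d) 1 k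
  obtain ⟨c, hc⟩ := h1
  have e1 : (X ^ 2 ^ d - X : R[X]) = X * (X ^ (2 ^ d - 1) - 1) := by
    rw [mul_sub, mul_one, ← pow_succ']
    congr 2
    have := Nat.one_le_two_pow (n := d); omega
  have e2 : (X ^ 2 ^ n - X : R[X]) = X * (X ^ (2 ^ n - 1) - 1) := by
    rw [mul_sub, mul_one, ← pow_succ']
    congr 2
    have := Nat.one_le_two_pow (n := n); omega
  rw [e1, e2]
  refine mul_dvd_mul_left X ?_
  have : (X ^ (2 ^ n - 1) - 1 : R[X]) = (X ^ (2 ^ d - 1)) ^ c - 1 ^ c := by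
    rw [one_pow, ← pow_mul, ← hc]
  rw [this]
  exact sub_dvd_pow_sub_pow _ _ _

lemma card_fixed (m d : ℕ) (hm : m ≠ 0) (hd : 0 < d) (hdm : d ∣ m) :
    (Finset.univ.filter fun x : GaloisField 2 m => x ^ 2 ^ d = x).card = 2 ^ d := by
  have hcardK : Fintype.card (GaloisField 2 m) = 2 ^ m := by
    rw [← Nat.card_eq_fintype_card, GaloisField.card 2 m hm]
  have hne_big : (X ^ 2 ^ m - X : (GaloisField 2 m)[X]) ≠ 0 :=
    FiniteField.X_pow_card_sub_X_ne_zero _ (Nat.one_lt_two_pow_iff.mpr hm)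
  have hroots_big : (X ^ 2 ^ m - X : (GaloisField 2 m)[X]).roots = Finset.univ.val := by
    rw [← hcardK]
    exact FiniteField.roots_X_pow_card_sub_X _
  have hsplits_big : Splits (X ^ 2 ^ m - X : (GaloisField 2 m)[X]) := by
    rw [splits_iff_card_roots, hroots_big,
      FiniteField.X_pow_card_sub_X_natDegree_eq _ (Nat.one_lt_two_pow_iff.mpr hm), ← hcardK]
    exact Finset.card_univ
  have hdvd : (X ^ 2 ^ d - X : (GaloisField 2 m)[X]) ∣ X ^ 2 ^ m - X := S_dvd_S hdm
  have hsplits : Splits (X ^ 2 ^ d - X : (GaloisField 2 m)[X]) :=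
    hsplits_big.of_dvd hne_big hdvd
  have hsep : (X ^ 2 ^ d - X : (GaloisField 2 m)[X]).Separable :=
    galois_poly_separable 2 (2 ^ d) (dvd_pow_self 2 (by omega))
  have hnodup := nodup_roots hsep
  have hcard_roots : Multiset.card (X ^ 2 ^ d - X : (GaloisField 2 m)[X]).roots = 2 ^ d := by
    rw [splits_iff_card_roots.mp hsplits]
    exact FiniteField.X_pow_card_sub_X_natDegree_eq _
      (Nat.one_lt_two_pow_iff.mpr (by omega))
  have hne : (X ^ 2 ^ d - X : (GaloisField 2 m)[X]) ≠ 0 :=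
    FiniteField.X_pow_card_sub_X_ne_zero _ (Nat.one_lt_two_pow_iff.mpr (by omega))
  have heq : (Finset.univ.filter fun x : GaloisField 2 m => x ^ 2 ^ d = x)
      = (X ^ 2 ^ d - X : (GaloisField 2 m)[X]).roots.toFinset := by
    ext x
    rw [Finset.mem_filter, Multiset.mem_toFinset, mem_roots hne]
    simp only [IsRoot.def, eval_sub, eval_pow, eval_X, sub_eq_zero, Finset.mem_univ, true_and]
  rw [heq, Multiset.toFinset_card_of_nodup hnodup, hcard_roots]

/-- The main counting lemma: at least `L` distinct monic irreducible polynomials of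
degree `d`, each dividing `X^(2^n) - X` exactly when `d ∣ n`. -/
lemma exists_minpolys (m d L e1 e2 : ℕ) (hm : m ≠ 0) (hd0 : 0 < d) (hdm : d ∣ m)
    (he1 : 0 < e1) (he2 : 0 < e2)
    (hcov : ∀ e, e ∣ d → e ≠ d → e ∣ e1 ∨ e ∣ e2)
    (hL : L * d + 2 ^ e1 + 2 ^ e2 ≤ 2 ^ d) :
    ∃ T : Finset ((ZMod 2)[X]), T.card = L ∧ ∀ g ∈ T,
      g.Monic ∧ Irreducible g ∧ g.natDegree = d ∧
        ∀ n, (g ∣ (X ^ 2 ^ n - X : (ZMod 2)[X]) ↔ d ∣ n) := by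
  set K := GaloisField 2 m
  set Fd := Finset.univ.filter fun x : K => x ^ 2 ^ d = x with hFdDef
  set Bad := (Finset.univ.filter fun x : K => x ^ 2 ^ e1 = x)
    ∪ (Finset.univ.filter fun x : K => x ^ 2 ^ e2 = x) with hBadDef
  set Good := Fd \ Bad with hGoodDef
  have hgood_deg : ∀ x ∈ Good, (minpoly (ZMod 2) x).natDegree = d := by
    intro x hx
    rw [hGoodDef, Finset.mem_sdiff] at hx
    obtain ⟨hxF, hxB⟩ := hx
    rw [hFdDef, Finset.mem_filter] at hxF
    have h1 : (minpoly (ZMod 2) x).natDegree ∣ d := deg_dvd x hxF.2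
    by_contra hne
    rcases hcov _ h1 hne with h | h
    · exact hxB (Finset.mem_union_left _ (Finset.mem_filter.mpr
        ⟨Finset.mem_univ _, pow_of_dvd h (pow_deg x)⟩))
    · exact hxB (Finset.mem_union_right _ (Finset.mem_filter.mpr
        ⟨Finset.mem_univ _, pow_of_dvd h (pow_deg x)⟩))
  have hcard_good : L * d ≤ Good.card := by
    have h1 : Fd.card = 2 ^ d := card_fixed m d hm hd0 hdm
    have h2 : Bad.card ≤ 2 ^ e1 + 2 ^ e2 := by
      refine le_trans (Finset.card_union_le _ _) ?_
      exact Nat.add_le_add (card_fixed_le m e1 he1) (card_fixed_le m e2 he2)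
    have h3 : Fd.card ≤ Good.card + Bad.card := Finset.card_le_card_sdiff_add_card
    omega
  set P := Good.image (fun x => minpoly (ZMod 2) x) with hPDef
  have hfiber : ∀ g ∈ P, (Good.filter fun x => minpoly (ZMod 2) x = g).card ≤ d := by
    intro g hg
    rw [hPDef, Finset.mem_image] at hg
    obtain ⟨x0, hx0, rfl⟩ := hg
    have hgne : (minpoly (ZMod 2) x0).map (algebraMap (ZMod 2) K) ≠ 0 := by
      refine Polynomial.map_ne_zero ?_
      exact minpoly.ne_zero (IsIntegral.of_finite _ x0)
    have hsub2 : (Good.filter fun x => minpoly (ZMod 2) x = minpoly (ZMod 2) x0)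
        ⊆ ((minpoly (ZMod 2) x0).map (algebraMap (ZMod 2) K)).roots.toFinset := by
      intro y hy
      rw [Finset.mem_filter] at hy
      rw [Multiset.mem_toFinset, mem_roots hgne, IsRoot.def, eval_map, ← aeval_def, ← hy.2]
      exact minpoly.aeval _ _
    calc _ ≤ ((minpoly (ZMod 2) x0).map (algebraMap (ZMod 2) K)).roots.toFinset.card :=
          Finset.card_le_card hsub2
      _ ≤ Multiset.card ((minpoly (ZMod 2) x0).map (algebraMap (ZMod 2) K)).roots :=
          Multiset.toFinset_card_le _
      _ ≤ ((minpoly (ZMod 2) x0).map (algebraMap (ZMod 2) K)).natDegree := card_roots' _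
      _ = d := by rw [natDegree_map]; exact hgood_deg x0 hx0
  have hP : L ≤ P.card := by
    have := Finset.card_le_mul_card_image Good d hfiber
    have hd' : d * L ≤ d * P.card := by
      rw [mul_comm d L]; exact le_trans hcard_good this
    exact Nat.le_of_mul_le_mul_left hd' hd0
  obtain ⟨T, hTP, hTcard⟩ := Finset.exists_subset_card_eq hP
  refine ⟨T, hTcard, ?_⟩
  intro g hg
  have hgP := hTP hg
  rw [hPDef, Finset.mem_image] at hgP
  obtain ⟨x, hx, rfl⟩ := hgP
  have hint : IsIntegral (ZMod 2) x := IsIntegral.of_finite _ x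
  refine ⟨minpoly.monic hint, minpoly.irreducible hint, hgood_deg x hx, fun n => ?_⟩
  rw [minpoly_dvd_iff', hgood_deg x hx]
lemma quad : ∀ d, 3 ≤ d → d * (d - 2) ≤ 2 ^ (d - 1) := by
  intro d hd
  induction d, hd using Nat.le_induction with
  | base => norm_num
  | succ d hd3 ih =>
    rcases Nat.eq_or_lt_of_le hd3 with h3 | h4
    · subst h3; norm_num
    · have h4' : 4 ≤ d := h4
      have key : (d + 1) * (d + 1 - 2) ≤ 2 * (d * (d - 2)) := by
        obtain ⟨e, rfl⟩ : ∃ e, d = e + 4 := ⟨d - 4, by omega⟩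
        have h1 : e + 4 - 2 = e + 2 := by omega
        have h2 : e + 4 + 1 - 2 = e + 3 := by omega
        rw [h1, h2]
        nlinarith
      calc (d + 1) * (d + 1 - 2) ≤ 2 * (d * (d - 2)) := key
        _ ≤ 2 * 2 ^ (d - 1) := by omega
        _ = 2 ^ (d + 1 - 1) := by rw [← pow_succ']; congr 1; omega

lemma pow_ineq {d L : ℕ} (hd : 3 ≤ d) (hL : L ≤ d - 2) :
    L * d + 2 ^ (d / 2) + 2 ^ (d / 2) ≤ 2 ^ d := by
  have h1 : d * (d - 2) ≤ 2 ^ (d - 1) := quad d hd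
  have h2 : L * d ≤ 2 ^ (d - 1) := le_trans (by nlinarith [Nat.mul_le_mul_right d hL]) h1
  have h3 : d / 2 ≤ d - 2 := by omega
  have h4 : (2:ℕ) ^ (d / 2) ≤ 2 ^ (d - 2) := Nat.pow_le_pow_right (by norm_num) h3
  have h5 : (2:ℕ) ^ (d - 2) + 2 ^ (d - 2) = 2 ^ (d - 1) := by
    obtain ⟨e, rfl⟩ : ∃ e, d = e + 3 := ⟨d - 3, by omega⟩
    simp [pow_succ]; ring
  have h6 : (2:ℕ) ^ (d - 1) + 2 ^ (d - 1) = 2 ^ d := by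
    obtain ⟨e, rfl⟩ : ∃ e, d = e + 3 := ⟨d - 3, by omega⟩
    simp [pow_succ]; ring
  omega

lemma cover {p q d : ℕ} (hfac : ∀ r, r.Prime → r ∣ d → r = p ∨ r = q) (hd0 : 0 < d) :
    ∀ e, e ∣ d → e ≠ d → e ∣ d / p ∨ e ∣ d / q := by
  intro e he hne
  obtain ⟨k, hk⟩ := he
  have hk2 : 2 ≤ k := by
    rcases Nat.lt_or_ge k 2 with h | h
    · interval_cases k <;> omega
    · exact h
  have hkp : k.minFac.Prime := Nat.minFac_prime (by omega)
  have hkd : k ∣ d := ⟨e, by rw [hk]; ring⟩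
  have hrd : k.minFac ∣ d := (Nat.minFac_dvd k).trans hkd
  obtain ⟨t, ht⟩ := Nat.minFac_dvd k
  have key : d / k.minFac = e * t := by
    rw [hk, show e * k = k.minFac * (e * t) by (conv_lhs => rw [ht]); ring]
    exact Nat.mul_div_cancel_left _ hkp.pos
  rcases hfac _ hkp hrd with h | h
  · left; rw [← h, key]; exact Dvd.intro t rfl
  · right; rw [← h, key]; exact Dvd.intro t rfl


end Stmt16Aux

open Stmt16Aux in
/-- If `m = p^i * q^j` with primes `p < q`, `i ≥ 1` and `j ≥ 2`, then
property `P₂` fails for `m`: there is a squarefree reducible `f ∈ 𝔽₂[X]` of degree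
`m` whose order `o(f)` (the least positive `n` with `f ∣ X^(2^n) - X`) equals `m`. -/
theorem stmt_16 (p q i j m : ℕ) (hp : p.Prime) (hq : q.Prime) (hpq : p < q)
    (hi : 0 < i) (hj : 2 ≤ j) (hm : m = p ^ i * q ^ j) :
    ∃ f : Polynomial (ZMod 2), Squarefree f ∧ ¬Irreducible f ∧ f.natDegree = m ∧
      IsLeast {n : ℕ | 0 < n ∧ f ∣ X ^ 2 ^ n - X} m := by
  classical
  obtain ⟨i', rfl⟩ : ∃ i', i = i' + 1 := ⟨i - 1, by omega⟩
  obtain ⟨j', rfl⟩ : ∃ j', j = j' + 2 := ⟨j - 2, by omega⟩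
  have hp2 : 2 ≤ p := hp.two_le
  have hq3 : 3 ≤ q := by have h2 := hp.two_le; omega
  have hcop : Nat.Coprime p q := (Nat.coprime_primes hp hq).mpr (Nat.ne_of_lt hpq)
  set E := p ^ i' * q ^ (j' + 1) with hE
  set A := p ^ (i' + 1) * q ^ (j' + 1) with hA
  set D := p ^ i' * q ^ (j' + 2) with hD
  have hAE : A = p * E := by rw [hA, hE]; ring
  have hDE : D = q * E := by rw [hD, hE]; ring
  have hqE : q ≤ E := by
    calc q ≤ q ^ (j' + 1) := Nat.le_self_pow (by omega) q
      _ ≤ p ^ i' * q ^ (j' + 1) := Nat.le_mul_of_pos_left _ (pow_pos (by omega) _)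
  have hE1 : 1 ≤ E := by omega
  have hqA : q ≤ A ∧ q ≤ D := by
    constructor
    · rw [hAE]; calc q ≤ E := hqE
        _ ≤ p * E := Nat.le_mul_of_pos_left _ (by omega)
    · rw [hDE]; calc q ≤ E := hqE
        _ ≤ q * E := Nat.le_mul_of_pos_left _ (by omega)
  have hmPQE : m = p * q * E := by rw [hm, hE]; ring
  have hm0 : m ≠ 0 := by
    rw [hmPQE]; positivity
  have hAm : A ∣ m := ⟨q, by rw [hmPQE, hAE]; ring⟩
  have hDm : D ∣ m := ⟨p, by rw [hmPQE, hDE]; ring⟩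
  have hEm : E ∣ m := ⟨p * q, by rw [hmPQE]; ring⟩
  -- the arithmetic: a*p + q + c = p*q with 1 ≤ a ≤ q-2, 1 ≤ c ≤ p-1
  set s := q / p with hs
  set r := q % p with hr
  have hqsr : q = p * s + r := (Nat.div_add_mod q p).symm
  have hr0 : r ≠ 0 := by
    intro h0
    exact ((Nat.Prime.coprime_iff_not_dvd hp).mp hcop) (Nat.dvd_of_mod_eq_zero h0)
  have hrp : r < p := Nat.mod_lt _ (by omega)
  have hs1 : 1 ≤ s := Nat.div_pos (le_of_lt hpq) (by omega)
  have hps : p * s ≤ q := by omega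
  have h2s : 2 * s ≤ q := le_trans (Nat.mul_le_mul_right s hp2) hps
  obtain ⟨a, ha'⟩ : ∃ a, q = a + 1 + s := ⟨q - 1 - s, by omega⟩
  obtain ⟨c, hc'⟩ : ∃ c, p = c + r := ⟨p - r, by omega⟩
  have ha1 : 1 ≤ a := by omega
  have haq : a ≤ q - 2 := by omega
  have hc1 : 1 ≤ c := by omega
  have hcp : c ≤ p - 1 := by omega
  have hkey : a * p + q + c = p * q := by
    have h2 : p * q = p * a + p + p * s := by
      conv_lhs => rw [ha']
      ring
    rw [h2]
    calc a * p + q + c = p * a + p * s + (r + c) := by rw [hqsr]; ring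
      _ = p * a + p * s + p := by rw [Nat.add_comm r c, ← hc']
      _ = p * a + p + p * s := by ring
  -- prime factors of divisors of m
  have hfacm : ∀ d : ℕ, d ∣ m → ∀ t : ℕ, t.Prime → t ∣ d → t = p ∨ t = q := by
    intro d hdm t ht htd
    have h1 : t ∣ p ^ (i' + 1) * q ^ (j' + 2) := (htd.trans hdm).trans (by rw [hm])
    rcases (Nat.Prime.dvd_mul ht).mp h1 with h | h
    · exact Or.inl ((Nat.prime_dvd_prime_iff_eq ht hp).mp (ht.dvd_of_dvd_pow h))
    · exact Or.inr ((Nat.prime_dvd_prime_iff_eq ht hq).mp (ht.dvd_of_dvd_pow h))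
  -- counting calls
  have hcall : ∀ d L : ℕ, d ∣ m → q ≤ d → L ≤ d - 2 →
      ∃ T : Finset ((ZMod 2)[X]), T.card = L ∧ ∀ g ∈ T,
        g.Monic ∧ Irreducible g ∧ g.natDegree = d ∧
          ∀ n, (g ∣ (X ^ 2 ^ n - X : (ZMod 2)[X]) ↔ d ∣ n) := by
    intro d L hdm hqd hLd
    have hd0 : 0 < d := by omega
    have hdp : 0 < d / p := Nat.div_pos (by omega) (by omega)
    have hdq : 0 < d / q := Nat.div_pos (by omega) (by omega)
    have hcov := cover (hfacm d hdm) hd0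
    have hd3 : 3 ≤ d := by omega
    have hIneq : L * d + 2 ^ (d / p) + 2 ^ (d / q) ≤ 2 ^ d := by
      have h1 : d / p ≤ d / 2 := Nat.div_le_div_left hp2 (by omega)
      have h2 : d / q ≤ d / 2 := Nat.div_le_div_left (by omega) (by omega)
      have h3 : (2:ℕ) ^ (d / p) ≤ 2 ^ (d / 2) := Nat.pow_le_pow_right (by omega) h1
      have h4 : (2:ℕ) ^ (d / q) ≤ 2 ^ (d / 2) := Nat.pow_le_pow_right (by omega) h2
      have h5 := pow_ineq hd3 hLd
      omega
    exact exists_minpolys m d L (d / p) (d / q) hm0 hd0 hdm hdp hdq hcov hIneq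
  obtain ⟨TA, hTAcard, hTA⟩ := hcall A a hAm hqA.1 (by omega)
  obtain ⟨TE, hTEcard, hTE⟩ := hcall E c hEm hqE (by omega)
  obtain ⟨TD, hTDcard, hTD⟩ := hcall D 1 hDm hqA.2 (by omega)
  -- degrees are pairwise distinct
  have hADne : A ≠ D := by
    rw [hAE, hDE]
    intro h
    exact (Nat.ne_of_lt hpq) (Nat.eq_of_mul_eq_mul_right (by omega) h)
  have hAEne : A ≠ E := by
    have h1 : E < A := by
      rw [hAE]
      exact lt_of_lt_of_le (by omega : E < 2 * E) (Nat.mul_le_mul_right E hp2)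
    exact ne_of_gt h1
  have hDEne : D ≠ E := by
    have h1 : E < D := by
      rw [hDE]
      exact lt_of_lt_of_le (by omega : E < 2 * E) (Nat.mul_le_mul_right E (by omega))
    exact ne_of_gt h1
  have hdisj1 : Disjoint TE TD := by
    rw [Finset.disjoint_left]
    intro g hgE hgD
    exact hDEne (((hTD g hgD).2.2.1.symm.trans (hTE g hgE).2.2.1))
  have hdisj2 : Disjoint TA (TE ∪ TD) := by
    rw [Finset.disjoint_left]
    intro g hgA hgU
    rcases Finset.mem_union.mp hgU with h | h
    · exact hAEne ((hTA g hgA).2.2.1.symm.trans (hTE g h).2.2.1)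
    · exact hADne ((hTA g hgA).2.2.1.symm.trans (hTD g h).2.2.1)
  set T := TA ∪ (TE ∪ TD) with hT
  have hmem : ∀ g ∈ T, g.Monic ∧ Irreducible g ∧ ∃ dg, dg ∣ m ∧ g.natDegree = dg ∧
      ∀ n, (g ∣ (X ^ 2 ^ n - X : (ZMod 2)[X]) ↔ dg ∣ n) := by
    intro g hg
    rcases Finset.mem_union.mp hg with h | h
    · obtain ⟨h1, h2, h3, h4⟩ := hTA g h; exact ⟨h1, h2, A, hAm, h3, h4⟩
    · rcases Finset.mem_union.mp h with h' | h'
      · obtain ⟨h1, h2, h3, h4⟩ := hTE g h'; exact ⟨h1, h2, E, hEm, h3, h4⟩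
      · obtain ⟨h1, h2, h3, h4⟩ := hTD g h'; exact ⟨h1, h2, D, hDm, h3, h4⟩
  have hpairwise : (T : Set ((ZMod 2)[X])).Pairwise (Function.onFun IsCoprime id) := by
    intro g hg g' hg' hne
    obtain ⟨hm1, hi1, -⟩ := hmem g hg
    obtain ⟨hm2, hi2, -⟩ := hmem g' hg'
    refine (Irreducible.coprime_iff_not_dvd hi1).mpr ?_
    intro hdvd
    exact hne (eq_of_monic_of_associated hm1 hm2 (hi1.associated_of_dvd hi2 hdvd))
  set f := ∏ g ∈ T, g with hf
  have hfSm : f ∣ (X ^ 2 ^ m - X : (ZMod 2)[X]) := by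
    refine Finset.prod_dvd_of_coprime hpairwise ?_
    intro g hg
    obtain ⟨-, -, dg, hdgm, -, h4⟩ := hmem g hg
    exact (h4 m).mpr hdgm
  have hSmsf : Squarefree (X ^ 2 ^ m - X : (ZMod 2)[X]) :=
    (galois_poly_separable 2 (2 ^ m) (dvd_pow_self 2 hm0)).squarefree
  have hfsf : Squarefree f := hSmsf.squarefree_of_dvd hfSm
  -- pick elements
  have hTAne : TA.Nonempty := Finset.card_pos.mp (by omega)
  obtain ⟨gA, hgA⟩ := hTAne
  have hTDne : TD.Nonempty := Finset.card_pos.mp (by omega)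
  obtain ⟨gD, hgD⟩ := hTDne
  have hgAT : gA ∈ T := Finset.mem_union_left _ hgA
  have hgDT : gD ∈ T := Finset.mem_union_right _ (Finset.mem_union_right _ hgD)
  have hgAD : gA ≠ gD := by
    intro h
    exact hADne ((hTA gA hgA).2.2.1.symm.trans (h ▸ (hTD gD hgD).2.2.1))
  -- not irreducible
  have hnotirr : ¬ Irreducible f := by
    intro hirr
    have hsplit : f = gA * ∏ g ∈ T.erase gA, g := (Finset.mul_prod_erase T id hgAT).symm
    rcases hirr.isUnit_or_isUnit hsplit with h | h
    · exact (hTA gA hgA).2.1.not_isUnit h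
    · have hgDe : gD ∈ T.erase gA := Finset.mem_erase.mpr ⟨Ne.symm hgAD, hgDT⟩
      have : gD ∣ ∏ g ∈ T.erase gA, g := Finset.dvd_prod_of_mem _ hgDe
      exact (hTD gD hgD).2.1.not_isUnit (isUnit_of_dvd_unit this h)
  -- degree
  have hfne : ∀ g ∈ T, g ≠ (0 : (ZMod 2)[X]) := fun g hg => (hmem g hg).1.ne_zero
  have hdeg : f.natDegree = m := by
    rw [hf, natDegree_prod _ _ hfne, hT, Finset.sum_union hdisj2, Finset.sum_union hdisj1]
    have hsA : ∑ g ∈ TA, g.natDegree = a * A := by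
      rw [Finset.sum_congr rfl (fun g hg => (hTA g hg).2.2.1), Finset.sum_const, hTAcard,
        smul_eq_mul]
    have hsE : ∑ g ∈ TE, g.natDegree = c * E := by
      rw [Finset.sum_congr rfl (fun g hg => (hTE g hg).2.2.1), Finset.sum_const, hTEcard,
        smul_eq_mul]
    have hsD : ∑ g ∈ TD, g.natDegree = D := by
      rw [Finset.sum_congr rfl (fun g hg => (hTD g hg).2.2.1), Finset.sum_const, hTDcard,
        one_smul]
    rw [hsA, hsE, hsD, hAE, hDE, hmPQE, ← hkey]
    ring
  refine ⟨f, hfsf, hnotirr, hdeg, ⟨⟨by omega, hfSm⟩, ?_⟩⟩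
  intro n hn
  obtain ⟨hn0, hfn⟩ := hn
  have hAn : A ∣ n := ((hTA gA hgA).2.2.2 n).mp ((Finset.dvd_prod_of_mem (fun g => g) hgAT).trans hfn)
  have hDn : D ∣ n := ((hTD gD hgD).2.2.2 n).mp ((Finset.dvd_prod_of_mem (fun g => g) hgDT).trans hfn)
  have hpn : p ^ (i' + 1) ∣ n := (Dvd.intro _ hA.symm).trans hAn
  have hqn : q ^ (j' + 2) ∣ n := dvd_trans ⟨p ^ i', by rw [hD]; ring⟩ hDn
  have hmn : m ∣ n := by
    rw [hm]
    exact Nat.Coprime.mul_dvd_of_dvd_of_dvd (Nat.Coprime.pow _ _ hcop) hpn hqn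
  exact Nat.le_of_dvd hn0 hmn
end

section
/- Let f ∈ 𝔽₂[X] be a nonconstant polynomial and let φ denote the Frobenius endomorphism a ↦ a² of the quotient ring 𝔽₂[X]/(f). Then there exists a positive integer n such that the n-th iterate φ^n is the identity map on 𝔽₂[X]/(f) if and only if f is squarefree. -/
open Polynomial

/-- For nonconstant `f ∈ 𝔽₂[X]`, some positive iterate of the Frobenius
endomorphism `a ↦ a²` of `𝔽₂[X]/(f)` is the identity map if and only if `f` is
squarefree. -/
theorem stmt_18 (f : Polynomial (ZMod 2)) (hf : 0 < f.natDegree) :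
    (∃ n : ℕ, 0 < n ∧ (fun a : Polynomial (ZMod 2) ⧸ Ideal.span {f} => a ^ 2)^[n] = id) ↔
      Squarefree f := by
  have hf0 : f ≠ 0 := fun h => by simp [h] at hf
  have hfu : ¬ IsUnit f := fun h => by
    have := Polynomial.natDegree_eq_zero_of_isUnit h
    omega
  set Q := Polynomial (ZMod 2) ⧸ Ideal.span {f} with hQ
  have hnt : Ideal.span {f} ≠ (⊤ : Ideal (Polynomial (ZMod 2))) := by
    rwa [Ne, Ideal.span_singleton_eq_top]
  haveI : Nontrivial Q := Ideal.Quotient.nontrivial_iff.mpr hnt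
  have key : Squarefree f ↔ IsReduced Q := by
    rw [← isRadical_iff_squarefree_of_ne_zero hf0,
      isRadical_iff_span_singleton, Ideal.isRadical_iff_quotient_reduced]
  rw [key]
  constructor
  · rintro ⟨n, hn, hid⟩
    constructor
    rintro a ⟨m, hm⟩
    rcases Nat.eq_zero_or_pos m with rfl | hm0
    · simp only [pow_zero] at hm
      exact absurd hm one_ne_zero
    have hid2 : (fun a : Q => a ^ 2)^[n * m] = id := by
      rw [Function.iterate_mul, hid, Function.iterate_id]
    have h1 : (fun a : Q => a ^ 2)^[n * m] a = a ^ 2 ^ (n * m) :=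
      congr_fun (pow_iterate 2 (n * m)) a
    rw [hid2] at h1
    have hle : m ≤ 2 ^ (n * m) := by
      calc m ≤ 2 ^ m := (Nat.lt_two_pow_self (n := m)).le
        _ ≤ 2 ^ (n * m) := Nat.pow_le_pow_right (by norm_num) (Nat.le_mul_of_pos_left m hn)
    have h2 : a ^ 2 ^ (n * m) = 0 := by
      calc a ^ 2 ^ (n * m) = a ^ m * a ^ (2 ^ (n * m) - m) := by
            rw [← pow_add]; congr 1; omega
        _ = 0 := by rw [hm, zero_mul]
    simpa [h2] using h1
  · intro hred
    haveI : CharP Q 2 :=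
      charP_of_injective_ringHom (algebraMap (ZMod 2) Q).injective 2
    haveI : Module.Finite (ZMod 2) Q := by
      have pb := AdjoinRoot.powerBasis hf0
      exact pb.finite
    haveI : Finite Q := Module.finite_of_finite (ZMod 2)
    have hinj : Function.Injective (frobenius Q 2) := frobenius_inj Q 2
    have hbij : Function.Bijective (frobenius Q 2) :=
      (Finite.injective_iff_bijective).mp hinj
    let e : Equiv.Perm Q := Equiv.ofBijective _ hbij
    refine ⟨orderOf e, orderOf_pos e, ?_⟩
    have he : (⇑e : Q → Q) = fun a => a ^ 2 := rfl
    have : e ^ orderOf e = 1 := pow_orderOf_eq_one e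
    calc (fun a : Q => a ^ 2)^[orderOf e] = (⇑e)^[orderOf e] := by rw [he]
      _ = ⇑(e ^ orderOf e) := Equiv.Perm.iterate_eq_pow e _
      _ = id := by rw [this]; rfl
end
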